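/- For a finite Borel measure μ on ℝ^d, 1 < q < ∞, every natural number n, and every ε > 0, one has 0 ≤ ln(S_μ^q(ε)) − ln(S_μ^q(2^{-n}ε)) ≤ n·ln(2^{d(q-1)}). -/

import Mathlib

open MeasureTheory Set
open scoped ENNReal NNReal

set_option linter.unnecessarySeqFocus false

variable {d : ℕ}

/-- The half-open dyadic-style cube of side `ε` at integer vector `k`. -/
def cube3 (ε : ℝ) (k : Fin d → ℤ) : Set (Fin d → ℝ) :=
  {x | ∀ i, ε * (k i : ℝ) ≤ x i ∧ x i < ε * ((k i : ℝ) + 1)}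

lemma cube3_meas (ε : ℝ) (k : Fin d → ℤ) : MeasurableSet (cube3 ε k) := by
  have : cube3 ε k = ⋂ i, (fun x : Fin d → ℝ => x i) ⁻¹'
      Ico (ε * (k i : ℝ)) (ε * ((k i : ℝ) + 1)) := by
    ext x; simp [cube3, mem_Ico]
  rw [this]
  exact MeasurableSet.iInter fun i => (measurable_pi_apply i) measurableSet_Ico

lemma cube3_disj {ε : ℝ} (hε : 0 < ε) : Pairwise (Function.onFun Disjoint (cube3 (d := d) ε)) := by
  intro k k' hkk'
  rw [Function.onFun, Set.disjoint_left]
  intro x hx hx'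
  obtain ⟨i, hi⟩ : ∃ i, k i ≠ k' i := by
    by_contra h; push_neg at h; exact hkk' (funext h)
  obtain ⟨h1, h2⟩ := hx i
  obtain ⟨h1', h2'⟩ := hx' i
  rcases hi.lt_or_gt with h | h
  · have : ((k i : ℝ) + 1) ≤ (k' i : ℝ) := by exact_mod_cast h
    nlinarith
  · have : ((k' i : ℝ) + 1) ≤ (k i : ℝ) := by exact_mod_cast h
    nlinarith

lemma cube3_cover {ε : ℝ} (hε : 0 < ε) : ⋃ k : Fin d → ℤ, cube3 ε k = univ := by
  ext x
  simp only [mem_iUnion, mem_univ, iff_true]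
  refine ⟨fun i => ⌊x i / ε⌋, fun i => ?_⟩
  have h1 := Int.floor_le (x i / ε)
  have h2 := Int.lt_floor_add_one (x i / ε)
  rw [le_div_iff₀ hε] at h1
  rw [div_lt_iff₀ hε] at h2
  constructor <;> nlinarith

/-- The bijection `(k, j) ↦ 2k + j` between `ℤ^d × {0,1}^d` and `ℤ^d`. -/
def E3 (d : ℕ) : ((Fin d → ℤ) × (Fin d → Bool)) ≃ (Fin d → ℤ) where
  toFun p := fun i => 2 * p.1 i + (if p.2 i then 1 else 0)
  invFun m := (fun i => m i / 2, fun i => decide (m i % 2 = 1))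
  left_inv := by
    rintro ⟨k, j⟩
    simp only [Prod.mk.injEq]
    constructor
    · funext i; by_cases h : j i = true <;> simp [h] <;> omega
    · funext i; by_cases h : j i = true <;> simp [h] <;> omega
  right_inv m := by
    funext i
    simp only
    by_cases h : m i % 2 = 1 <;> simp [h] <;> omega

lemma cube3_subdiv {ε : ℝ} (hε : 0 < ε) (k : Fin d → ℤ) :
    cube3 ε k = ⋃ j : Fin d → Bool, cube3 (ε / 2) (E3 d (k, j)) := by
  ext x
  simp only [mem_iUnion, cube3, mem_setOf_eq, E3, Equiv.coe_fn_mk]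
  constructor
  · intro h
    refine ⟨fun i => decide (ε * (k i : ℝ) + ε / 2 ≤ x i), fun i => ?_⟩
    obtain ⟨h1, h2⟩ := h i
    by_cases hc : ε * (k i : ℝ) + ε / 2 ≤ x i <;> simp only [hc, decide_true, decide_false,
        if_true, if_false] <;> push_cast <;> constructor <;> nlinarith
  · rintro ⟨j, hj⟩ i
    obtain ⟨h1, h2⟩ := hj i
    by_cases hb : j i = true <;> simp only [hb, if_true, if_false] at h1 h2 <;>
      push_cast at h1 h2 <;> constructor <;> nlinarith

lemma sum_rpow_le3 {ι : Type*} [Fintype ι] (a : ι → ℝ≥0∞) {p : ℝ} (hp : 1 ≤ p)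
    (ha : ∀ j, a j ≠ ⊤) : ∑ j, a j ^ p ≤ (∑ j, a j) ^ p := by
  set Sa := ∑ j, a j with hSa
  by_cases hS : Sa = 0
  · have h0 : ∀ j ∈ Finset.univ, a j = 0 := fun j _ => le_antisymm
      ((Finset.single_le_sum (fun _ _ => zero_le) (Finset.mem_univ j)).trans hS.le) (zero_le)
    calc ∑ j, a j ^ p = ∑ j : ι, (0:ℝ≥0∞) := by
          refine Finset.sum_congr rfl fun j hj => ?_
          rw [h0 j hj, ENNReal.zero_rpow_of_pos (by linarith)]
      _ ≤ _ := by simp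
  · have hStop : Sa ≠ ⊤ := by
      rw [hSa]
      exact (ENNReal.sum_lt_top.mpr fun j _ => (ha j).lt_top).ne
    calc ∑ j, a j ^ p ≤ ∑ j, Sa ^ (p - 1) * a j := by
          refine Finset.sum_le_sum fun j _ => ?_
          by_cases h0 : a j = 0
          · rw [h0, ENNReal.zero_rpow_of_pos (by linarith), mul_zero]
          · calc a j ^ p = a j ^ ((p - 1) + 1) := by ring_nf
              _ = a j ^ (p - 1) * a j ^ (1:ℝ) := ENNReal.rpow_add _ _ h0 (ha j)
              _ ≤ Sa ^ (p - 1) * a j := by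
                rw [ENNReal.rpow_one]
                exact mul_le_mul_left (ENNReal.rpow_le_rpow
                  (Finset.single_le_sum (fun _ _ => zero_le) (Finset.mem_univ j)) (by linarith)) _
      _ = Sa ^ (p - 1) * Sa := by rw [← Finset.mul_sum]
      _ = Sa ^ p := by
          nth_rewrite 2 [← ENNReal.rpow_one Sa]
          rw [← ENNReal.rpow_add _ _ hS hStop]
          norm_num

lemma card_rpow3 (d : ℕ) (r : ℝ) :
    ((Finset.univ (α := Fin d → Bool)).card : ℝ≥0∞) ^ r = (2:ℝ≥0∞) ^ ((d:ℝ) * r) := by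
  rw [Finset.card_univ]
  have : (Fintype.card (Fin d → Bool) : ℝ≥0∞) = (2:ℝ≥0∞) ^ ((d:ℝ)) := by
    rw [Fintype.card_fun]
    simp only [Fintype.card_bool, Fintype.card_fin]
    rw [Nat.cast_pow, Nat.cast_ofNat, ← ENNReal.rpow_natCast]
  rw [this, ← ENNReal.rpow_mul]

/-- The quantity `S_μ^q(ε)` as an extended nonnegative real. -/
noncomputable def T3 (μ : Measure (Fin d → ℝ)) (q ε : ℝ) : ℝ≥0∞ :=
  ∑' k : Fin d → ℤ, μ (cube3 ε k) ^ q

lemma T3_ne_top (μ : Measure (Fin d → ℝ)) [IsFiniteMeasure μ] {q : ℝ} (hq : 1 < q)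
    {ε : ℝ} (hε : 0 < ε) : T3 μ q ε ≠ ⊤ := by
  have hM : μ univ ≠ ⊤ := measure_ne_top μ univ
  have key : ∀ k : Fin d → ℤ, μ (cube3 ε k) ^ q ≤ μ univ ^ (q - 1) * μ (cube3 ε k) := by
    intro k
    by_cases h0 : μ (cube3 ε k) = 0
    · rw [h0, ENNReal.zero_rpow_of_pos (by linarith), mul_zero]
    · calc μ (cube3 ε k) ^ q = μ (cube3 ε k) ^ ((q - 1) + 1) := by ring_nf
        _ = μ (cube3 ε k) ^ (q - 1) * μ (cube3 ε k) ^ (1 : ℝ) :=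
          ENNReal.rpow_add _ _ h0 (measure_ne_top μ _)
        _ ≤ μ univ ^ (q - 1) * μ (cube3 ε k) := by
          rw [ENNReal.rpow_one]
          exact mul_le_mul_left (ENNReal.rpow_le_rpow (measure_mono (subset_univ _))
            (by linarith)) _
  refine ne_top_of_le_ne_top ?_ ((ENNReal.tsum_le_tsum key).trans_eq ENNReal.tsum_mul_left)
  exact ENNReal.mul_ne_top (ENNReal.rpow_ne_top_of_nonneg (by linarith) hM)
    (ne_top_of_le_ne_top hM (tsum_measure_le_measure_univ
      (fun k => (cube3_meas ε k).nullMeasurableSet) ((cube3_disj hε).mono fun _ _ h => h.aedisjoint)))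

lemma T3_ne_zero (μ : Measure (Fin d → ℝ)) (hμ : μ univ ≠ 0) {q : ℝ} (hq : 1 < q)
    {ε : ℝ} (hε : 0 < ε) : T3 μ q ε ≠ 0 := by
  intro h
  rw [T3, ENNReal.tsum_eq_zero] at h
  have h' : ∀ k : Fin d → ℤ, μ (cube3 ε k) = 0 := fun k =>
    (ENNReal.rpow_eq_zero_iff_of_pos (by linarith)).mp (h k)
  apply hμ
  have : μ univ = μ (⋃ k : Fin d → ℤ, cube3 ε k) := by rw [cube3_cover hε]
  rw [this]
  exact le_antisymm ((measure_iUnion_le _).trans (by simp [h'])) (zero_le)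

lemma T3_two_scale (μ : Measure (Fin d → ℝ)) [IsFiniteMeasure μ] {q : ℝ} (hq : 1 < q)
    {ε : ℝ} (hε : 0 < ε) :
    T3 μ q (ε/2) ≤ T3 μ q ε ∧
      T3 μ q ε ≤ (2:ℝ≥0∞) ^ ((d:ℝ) * (q-1)) * T3 μ q (ε/2) := by
  set a : (Fin d → ℤ) → (Fin d → Bool) → ℝ≥0∞ :=
    fun k j => μ (cube3 (ε/2) (E3 d (k, j))) with ha
  have hsplit : ∀ k, μ (cube3 ε k) = ∑ j, a k j := by
    intro k
    rw [cube3_subdiv hε k, measure_iUnion ?_ (fun j => cube3_meas _ _), tsum_fintype]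
    intro j j' hne
    refine cube3_disj (half_pos hε) ?_
    exact fun hEq => hne (by simpa using congrArg Prod.snd ((E3 d).injective hEq))
  have hhalf : T3 μ q (ε/2) = ∑' k : Fin d → ℤ, ∑ j : Fin d → Bool, (a k j) ^ q := by
    rw [T3, ← (E3 d).tsum_eq (fun m => μ (cube3 (ε/2) m) ^ q)]
    exact (ENNReal.tsum_prod (f := fun (k : Fin d → ℤ) (j : Fin d → Bool) =>
      μ (cube3 (ε/2) (E3 d (k, j))) ^ q)).trans (tsum_congr fun k => tsum_fintype _)
  constructor
  · rw [hhalf]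
    refine ENNReal.tsum_le_tsum fun k => ?_
    rw [hsplit k]
    exact sum_rpow_le3 _ hq.le (fun j => measure_ne_top μ _)
  · rw [hhalf, ← ENNReal.tsum_mul_left]
    refine ENNReal.tsum_le_tsum fun k => ?_
    rw [hsplit k]
    calc (∑ j, a k j) ^ q ≤ ((Finset.univ (α := Fin d → Bool)).card : ℝ≥0∞) ^ (q-1)
        * ∑ j, a k j ^ q := ENNReal.rpow_sum_le_const_mul_sum_rpow Finset.univ (a k) hq.le
      _ = _ := by rw [card_rpow3 d (q-1)]

theorem stmt3 (d : ℕ) (μ : Measure (Fin d → ℝ)) [IsFiniteMeasure μ]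
    (hμ : μ univ ≠ 0) (q : ℝ) (hq : 1 < q)
    (S : ℝ → ℝ)
    (hS : ∀ ε : ℝ, S ε = (∑' k : Fin d → ℤ,
        (μ {x | ∀ i, ε * (k i : ℝ) ≤ x i ∧ x i < ε * ((k i : ℝ) + 1)}) ^ q).toReal)
    (n : ℕ) (ε : ℝ) (hε : 0 < ε) :
    0 ≤ Real.log (S ε) - Real.log (S (2 ^ (-(n : ℝ)) * ε)) ∧
      Real.log (S ε) - Real.log (S (2 ^ (-(n : ℝ)) * ε))
        ≤ n * Real.log (2 ^ ((d : ℝ) * (q - 1))) := by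
  have hS' : ∀ ε : ℝ, S ε = (T3 μ q ε).toReal := fun ε => hS ε
  set c : ℝ := (2:ℝ) ^ ((d : ℝ) * (q - 1)) with hc
  have hcpos : 0 < c := Real.rpow_pos_of_pos two_pos _
  have Spos : ∀ δ : ℝ, 0 < δ → 0 < S δ := fun δ hδ => by
    rw [hS']
    exact ENNReal.toReal_pos (T3_ne_zero μ hμ hq hδ) (T3_ne_top μ hq hδ)
  have hstep : ∀ δ : ℝ, 0 < δ → S (δ/2) ≤ S δ ∧ S δ ≤ c * S (δ/2) := by
    intro δ hδ
    obtain ⟨h1, h2⟩ := T3_two_scale μ hq hδ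
    constructor
    · rw [hS', hS']
      exact ENNReal.toReal_le_toReal (T3_ne_top μ hq (half_pos hδ)) (T3_ne_top μ hq hδ) |>.mpr h1
    · rw [hS', hS']
      calc (T3 μ q δ).toReal ≤ ((2:ℝ≥0∞) ^ ((d:ℝ) * (q-1)) * T3 μ q (δ/2)).toReal := by
            refine ENNReal.toReal_le_toReal (T3_ne_top μ hq hδ) ?_ |>.mpr h2
            exact ENNReal.mul_ne_top (ENNReal.rpow_ne_top_of_nonneg
              (mul_nonneg (Nat.cast_nonneg d) (by linarith)) ENNReal.ofNat_ne_top)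
              (T3_ne_top μ hq (half_pos hδ))
        _ = c * (T3 μ q (δ/2)).toReal := by
            rw [ENNReal.toReal_mul, hc, ← ENNReal.toReal_rpow]
            norm_num
  have hlog : ∀ δ : ℝ, 0 < δ →
      0 ≤ Real.log (S δ) - Real.log (S (δ/2)) ∧
        Real.log (S δ) - Real.log (S (δ/2)) ≤ Real.log c := by
    intro δ hδ
    obtain ⟨h1, h2⟩ := hstep δ hδ
    have p1 := Spos _ (half_pos hδ)
    constructor
    · have := Real.log_le_log p1 h1
      linarith
    · have := Real.log_le_log (Spos δ hδ) h2
      rw [Real.log_mul hcpos.ne' p1.ne'] at this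
      linarith
  clear hS hS' hstep
  induction n with
  | zero => simp
  | succ n ih =>
    have hδ : 0 < (2:ℝ) ^ (-(n:ℝ)) * ε := mul_pos (Real.rpow_pos_of_pos two_pos _) hε
    have heq : (2:ℝ) ^ (-((n+1 : ℕ):ℝ)) * ε = ((2:ℝ) ^ (-(n:ℝ)) * ε) / 2 := by
      push_cast
      rw [show -((n:ℝ) + 1) = -(n:ℝ) + (-1) by ring, Real.rpow_add two_pos,
        Real.rpow_neg_one]
      ring
    obtain ⟨l1, l2⟩ := hlog _ hδ
    rw [heq]
    push_cast
    constructor <;> [linarith [ih.1]; linarith [ih.2]]
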